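/- Let G be a group acting on a set, and let Γ ≤ G with [G : Γ] finite. Suppose the G-orbit of an element l decomposes into finitely many Γ-orbits with representatives l_1, …, l_r. Then [G : Γ] = Σ_{i=1}^r [G_{l_i} : Γ_{l_i}], where G_{l_i} and Γ_{l_i} denote the stabilizers of l_i in G and Γ respectively. -/

import Mathlib

theorem index_eq_sum_of_stabilizer_relindex {G : Type*} [Group G] {X : Type*} [MulAction G X]
    (Γ : Subgroup G) (hΓ : Γ.index ≠ 0) (l : X) (r : ℕ) (li : Fin r → X)
    (hmem : ∀ i, li i ∈ MulAction.orbit G l)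
    (hcover : ∀ x ∈ MulAction.orbit G l, ∃ i, x ∈ MulAction.orbit Γ (li i))
    (hdisj : ∀ i j, i ≠ j → Disjoint (MulAction.orbit Γ (li i)) (MulAction.orbit Γ (li j))) :
    Γ.index = ∑ i, Γ.relIndex (MulAction.stabilizer G (li i)) := by
  classical
  simp only [MulAction.mem_orbit_iff] at hmem
  choose g hg using hmem
  set S : Fin r → Subgroup G := fun i => MulAction.stabilizer G (li i) with hS
  -- the forward map
  have wd : ∀ (i : Fin r) (s t : S i), s⁻¹ * t ∈ Γ.subgroupOf (S i) →
      (QuotientGroup.mk ((g i)⁻¹ * (s : G)) : G ⧸ Γ) = QuotientGroup.mk ((g i)⁻¹ * (t : G)) := by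
    intro i s t hst
    rw [Subgroup.mem_subgroupOf] at hst
    rw [QuotientGroup.eq]
    convert hst using 1
    push_cast
    group
  let F : (Σ i : Fin r, (S i ⧸ Γ.subgroupOf (S i))) → G ⧸ Γ :=
    fun p => Quotient.liftOn' p.2 (fun s => QuotientGroup.mk ((g p.1)⁻¹ * (s : G)))
      (fun s t hst => wd p.1 s t (QuotientGroup.leftRel_apply.mp hst))
  have hFmk : ∀ (i : Fin r) (s : S i),
      F ⟨i, QuotientGroup.mk s⟩ = QuotientGroup.mk ((g i)⁻¹ * (s : G)) := fun _ _ => rfl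
  have hinj : Function.Injective F := by
    rintro ⟨i, a⟩ ⟨j, b⟩ h
    induction a using Quotient.inductionOn' with
    | h s =>
      induction b using Quotient.inductionOn' with
      | h t =>
        rw [hFmk, hFmk, QuotientGroup.eq] at h
        set γ : G := ((g i)⁻¹ * (s : G))⁻¹ * ((g j)⁻¹ * (t : G)) with hγ
        have hij : i = j := by
          by_contra hne
          have hlj : li j ∈ MulAction.orbit Γ (li i) := by
            refine ⟨⟨γ⁻¹, inv_mem h⟩, ?_⟩
            show γ⁻¹ • li i = li j
            have hsi : (s : G) • li i = li i := s.2
            have htj : (t : G) • li j = li j := t.2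
            have hgi : (g i)⁻¹ • li i = l := by
              rw [← hg i, inv_smul_smul]
            have : γ⁻¹ = (t : G)⁻¹ * (g j) * ((g i)⁻¹ * (s : G))⁻¹⁻¹ := by
              rw [hγ]; group
            rw [this]
            simp only [inv_inv, mul_smul, hsi, hgi, hg j, inv_smul_eq_iff, htj]
          exact Set.disjoint_left.mp (hdisj i j hne) hlj (MulAction.mem_orbit_self _)
        subst hij
        refine Sigma.ext rfl (heq_of_eq ?_)
        rw [Quotient.eq'']
        rw [QuotientGroup.leftRel_apply, Subgroup.mem_subgroupOf]
        have hc : ((s⁻¹ * t : S i) : G) = γ := by rw [hγ]; push_cast; group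
        rw [hc]; exact h
  have hsurj : Function.Surjective F := by
    intro q
    induction q using Quotient.inductionOn' with
    | h x =>
      obtain ⟨i, γ, hγ⟩ := hcover (x⁻¹ • l) ⟨x⁻¹, rfl⟩
      have hs : (g i * x * (γ : G)) ∈ S i := by
        show (g i * x * (γ : G)) • li i = li i
        have : (γ : G) • li i = x⁻¹ • l := hγ
        rw [mul_smul, mul_smul, this, smul_inv_smul, hg i]
      refine ⟨⟨i, QuotientGroup.mk ⟨_, hs⟩⟩, ?_⟩
      rw [hFmk]
      show (QuotientGroup.mk ((g i)⁻¹ * (g i * x * (γ : G))) : G ⧸ Γ) = QuotientGroup.mk x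
      rw [QuotientGroup.eq]
      have hc : ((g i)⁻¹ * (g i * x * (γ : G)))⁻¹ * x = (γ : G)⁻¹ := by group
      rw [hc]
      exact inv_mem γ.2
  have e : (Σ i : Fin r, (S i ⧸ Γ.subgroupOf (S i))) ≃ G ⧸ Γ :=
    Equiv.ofBijective F ⟨hinj, hsurj⟩
  have hfin : Finite (G ⧸ Γ) := Nat.finite_of_card_ne_zero hΓ
  haveI : Finite (Σ i : Fin r, (S i ⧸ Γ.subgroupOf (S i))) := Finite.of_equiv _ e.symm
  haveI : ∀ i, Finite (S i ⧸ Γ.subgroupOf (S i)) := fun i =>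
    Finite.of_injective _ (@sigma_mk_injective _ (fun j => S j ⧸ Γ.subgroupOf (S j)) i)
  haveI : ∀ i, Fintype (S i ⧸ Γ.subgroupOf (S i)) := fun i => Fintype.ofFinite _
  haveI : Fintype (G ⧸ Γ) := Fintype.ofFinite _
  calc Γ.index = Nat.card (G ⧸ Γ) := rfl
    _ = Nat.card (Σ i : Fin r, (S i ⧸ Γ.subgroupOf (S i))) := (Nat.card_congr e).symm
    _ = ∑ i, Nat.card (S i ⧸ Γ.subgroupOf (S i)) := by
        rw [Nat.card_eq_fintype_card, Fintype.card_sigma]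
        exact Finset.sum_congr rfl fun i _ => (Nat.card_eq_fintype_card).symm
    _ = ∑ i, Γ.relIndex (S i) := rfl
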